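/- Consider the two-layer ReLU network minimal ℓ2-norm interpolation problem on orthonormal data: for data (x_i, y_i)_{i=1}^n with x_i^⊤ x_{i'} = 1{i=i'} and y_i ≠ 0, the parameters θ* consisting of two neurons (a_+, w_+) = (c_+, c_+ · Σ_{i: y_i>0} (y_i/c_+²) x_i) with c_+² = √(Σ_{i: y_i>0} y_i²) and the analogous negative pair interpolate the data, and their squared ℓ2-norm satisfies (1/2)‖θ*‖² = √(Σ_{i: y_i>0} y_i²) + √(Σ_{i: y_i<0} y_i²). -/

import Mathlib

open scoped RealInnerProductSpace

lemma aux_inner_sum {E : Type*} [NormedAddCommGroup E] [InnerProductSpace ℝ E]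
    {ι : Type*} [DecidableEq ι] {x : ι → E} (hx : Orthonormal ℝ x)
    (c : ι → ℝ) (s : Finset ι) (j : ι) :
    ⟪∑ i ∈ s, c i • x i, x j⟫ = if j ∈ s then c j else 0 := by
  simp [sum_inner, real_inner_smul_left, orthonormal_iff_ite.mp hx, Finset.sum_ite_eq']

lemma aux_norm_sq {E : Type*} [NormedAddCommGroup E] [InnerProductSpace ℝ E]
    {ι : Type*} [DecidableEq ι] {x : ι → E} (hx : Orthonormal ℝ x)
    (c : ι → ℝ) (s : Finset ι) :
    ‖∑ i ∈ s, c i • x i‖ ^ 2 = ∑ i ∈ s, c i ^ 2 := by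
  rw [← real_inner_self_eq_norm_sq, inner_sum]
  refine Finset.sum_congr rfl fun i hi => ?_
  rw [real_inner_smul_right, aux_inner_sum hx, if_pos hi, sq]

theorem min_norm_two_neuron_interpolator {d n : ℕ}
    (x : Fin n → EuclideanSpace ℝ (Fin d)) (hx : Orthonormal ℝ x)
    (y : Fin n → ℝ) (hy : ∀ i, y i ≠ 0)
    (cp cm : ℝ)
    (hcp : cp ^ 2 = Real.sqrt (∑ i ∈ Finset.univ.filter (fun i => 0 < y i), (y i) ^ 2))
    (hcp0 : 0 ≤ cp)
    (hcm : cm ^ 2 = Real.sqrt (∑ i ∈ Finset.univ.filter (fun i => y i < 0), (y i) ^ 2))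
    (hcm0 : 0 ≤ cm)
    (ap am : ℝ) (wp wm : EuclideanSpace ℝ (Fin d))
    (hap : ap = cp) (ham : am = -cm)
    (hwp : wp = cp • ∑ i ∈ Finset.univ.filter (fun i => 0 < y i), (y i / cp ^ 2) • x i)
    (hwm : wm = cm • ∑ i ∈ Finset.univ.filter (fun i => y i < 0), (-y i / cm ^ 2) • x i) :
    (∀ i, ap * max 0 ⟪wp, x i⟫ + am * max 0 ⟪wm, x i⟫ = y i) ∧
    (1 / 2) * (ap ^ 2 + ‖wp‖ ^ 2 + am ^ 2 + ‖wm‖ ^ 2) =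
      Real.sqrt (∑ i ∈ Finset.univ.filter (fun i => 0 < y i), (y i) ^ 2) +
      Real.sqrt (∑ i ∈ Finset.univ.filter (fun i => y i < 0), (y i) ^ 2) := by
  set P := Finset.univ.filter (fun i => 0 < y i) with hP
  set M := Finset.univ.filter (fun i => y i < 0) with hM
  set sp := ∑ i ∈ P, (y i) ^ 2 with hsp
  set sm := ∑ i ∈ M, (y i) ^ 2 with hsm
  have hsp0 : 0 ≤ sp := Finset.sum_nonneg fun i _ => sq_nonneg _
  have hsm0 : 0 ≤ sm := Finset.sum_nonneg fun i _ => sq_nonneg _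
  have hcp4 : cp ^ 2 * cp ^ 2 = sp := by rw [hcp, Real.mul_self_sqrt hsp0]
  have hcm4 : cm ^ 2 * cm ^ 2 = sm := by rw [hcm, Real.mul_self_sqrt hsm0]
  -- inner products
  have hip : ∀ j, ⟪wp, x j⟫ = cp * (if j ∈ P then y j / cp ^ 2 else 0) := by
    intro j
    rw [hwp, inner_smul_left, aux_inner_sum hx]
    simp
  have him : ∀ j, ⟪wm, x j⟫ = cm * (if j ∈ M then -y j / cm ^ 2 else 0) := by
    intro j
    rw [hwm, inner_smul_left, aux_inner_sum hx]
    simp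
  have hcpne : ∀ j ∈ P, cp ≠ 0 := by
    intro j hj h0
    have : sp = 0 := by rw [← hcp4, h0]; ring
    have : (y j) ^ 2 = 0 := by
      have := (Finset.sum_eq_zero_iff_of_nonneg (fun i _ => sq_nonneg (y i))).mp this j hj
      exact this
    exact hy j (pow_eq_zero_iff (by norm_num) |>.mp this)
  have hcmne : ∀ j ∈ M, cm ≠ 0 := by
    intro j hj h0
    have : sm = 0 := by rw [← hcm4, h0]; ring
    have : (y j) ^ 2 = 0 := by
      have := (Finset.sum_eq_zero_iff_of_nonneg (fun i _ => sq_nonneg (y i))).mp this j hj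
      exact this
    exact hy j (pow_eq_zero_iff (by norm_num) |>.mp this)
  constructor
  · intro j
    rcases lt_or_gt_of_ne (hy j) with hneg | hpos
    · -- y j < 0 : j ∈ M, j ∉ P
      have hjM : j ∈ M := by simp [hM, hneg]
      have hjP : j ∉ P := by simp [hP, not_lt.mpr hneg.le]
      have hcm' : cm ≠ 0 := hcmne j hjM
      have h1 : ⟪wp, x j⟫ = 0 := by rw [hip j, if_neg hjP, mul_zero]
      have h2 : ⟪wm, x j⟫ = -y j / cm := by
        rw [him j, if_pos hjM]; field_simp
      have hpos2 : 0 ≤ -y j / cm := by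
        apply div_nonneg (by linarith) (hcm0)
      rw [h1, h2, max_self, mul_zero, zero_add, max_eq_right hpos2, ham]
      field_simp
    · -- y j > 0
      have hjP : j ∈ P := by simp [hP, hpos]
      have hjM : j ∉ M := by simp [hM, not_lt.mpr hpos.le]
      have hcp' : cp ≠ 0 := hcpne j hjP
      have h1 : ⟪wm, x j⟫ = 0 := by rw [him j, if_neg hjM, mul_zero]
      have h2 : ⟪wp, x j⟫ = y j / cp := by
        rw [hip j, if_pos hjP]; field_simp
      have hpos2 : 0 ≤ y j / cp := div_nonneg hpos.le hcp0
      rw [h1, h2, max_self, mul_zero, add_zero, max_eq_right hpos2, hap]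
      field_simp
  · -- norm computation
    have hnp : ‖wp‖ ^ 2 = cp ^ 2 := by
      rw [hwp, norm_smul, mul_pow, aux_norm_sq hx]
      rcases eq_or_ne cp 0 with h0 | h0
      · simp [h0]
      · have : ∑ i ∈ P, (y i / cp ^ 2) ^ 2 = sp / (cp ^ 2 * cp ^ 2) := by
          rw [hsp, Finset.sum_div]
          exact Finset.sum_congr rfl fun i _ => by ring
        rw [this, hcp4]
        simp [abs_of_nonneg hcp0]
        have hspne : sp ≠ 0 := by rw [← hcp4]; positivity
        rw [div_self hspne, mul_one]
    have hnm : ‖wm‖ ^ 2 = cm ^ 2 := by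
      rw [hwm, norm_smul, mul_pow, aux_norm_sq hx]
      rcases eq_or_ne cm 0 with h0 | h0
      · simp [h0]
      · have : ∑ i ∈ M, (-y i / cm ^ 2) ^ 2 = sm / (cm ^ 2 * cm ^ 2) := by
          rw [hsm, Finset.sum_div]
          exact Finset.sum_congr rfl fun i _ => by ring
        rw [this, hcm4]
        simp [abs_of_nonneg hcm0]
        have hsmne : sm ≠ 0 := by rw [← hcm4]; positivity
        rw [div_self hsmne, mul_one]
    rw [hnp, hnm, hap, ham, ← hcp, ← hcm]
    ring
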